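/- Let (R, M) be a Noetherian local ring and h₁, h₂ ∈ M elements such that the quotient R/(h₁, h₂) has length at most d as an R-module. Then the maximal ideal M can be generated by at most d + 1 elements. -/

import Mathlib

/-- If every strict chain of submodules between `N₀` and `N` has at most `d+1` terms,
then `N` is generated over `N₀` by at most `d` elements. -/
lemma chain_gen {R Q : Type*} [CommRing R] [AddCommGroup Q] [Module R Q] :
    ∀ (d : ℕ) (N₀ N : Submodule R Q), N₀ ≤ N →
    (∀ (k : ℕ) (c : Fin (k + 1) → Submodule R Q), StrictMono c →
      (∀ i, N₀ ≤ c i ∧ c i ≤ N) → k ≤ d) →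
    ∃ s : Finset Q, s.card ≤ d ∧ N₀ ⊔ Submodule.span R (s : Set Q) = N := by
  classical
  intro d
  induction d with
  | zero =>
    intro N₀ N hle hch
    refine ⟨∅, le_refl 0, ?_⟩
    have heq : N₀ = N := by
      by_contra hne
      have hlt : N₀ < N := lt_of_le_of_ne hle hne
      have h1 := hch 1 ![N₀, N] ?_ ?_
      · omega
      · rw [Fin.strictMono_iff_lt_succ]
        intro i
        fin_cases i <;> simpa using hlt
      · intro i; fin_cases i <;> simp [hle]
    simp [heq]
  | succ d ih =>
    intro N₀ N hle hch
    by_cases heq : N₀ = N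
    · exact ⟨∅, by simp, by simp [heq]⟩
    · have hlt : N₀ < N := lt_of_le_of_ne hle heq
      obtain ⟨x, hxN, hxN₀⟩ := SetLike.exists_of_lt hlt
      set N₁ := N₀ ⊔ Submodule.span R {x} with hN₁def
      have hN₀₁ : N₀ < N₁ := by
        refine lt_of_le_of_ne le_sup_left (fun h => hxN₀ ?_)
        rw [h]
        exact Submodule.mem_sup_right (Submodule.mem_span_singleton_self x)
      have hN₁N : N₁ ≤ N := sup_le hle ((Submodule.span_singleton_le_iff_mem x N).mpr hxN)
      have hch' : ∀ (k : ℕ) (c : Fin (k + 1) → Submodule R Q), StrictMono c →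
          (∀ i, N₁ ≤ c i ∧ c i ≤ N) → k ≤ d := by
        intro k c hc hb
        have hmono : StrictMono (Fin.cases N₀ c : Fin (k + 2) → Submodule R Q) := by
          rw [Fin.strictMono_iff_lt_succ]
          intro i
          induction i using Fin.cases with
          | zero =>
            simp only [Fin.castSucc_zero, Fin.cases_zero, Fin.cases_succ]
            exact lt_of_lt_of_le hN₀₁ (hb 0).1
          | succ j =>
            rw [← Fin.succ_castSucc]
            simp only [Fin.cases_succ]
            exact hc (Fin.castSucc_lt_succ (i := j))
        have hbd : ∀ i, N₀ ≤ (Fin.cases N₀ c : Fin (k + 2) → Submodule R Q) i ∧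
            (Fin.cases N₀ c : Fin (k + 2) → Submodule R Q) i ≤ N := by
          intro i
          induction i using Fin.cases with
          | zero => exact ⟨le_refl _, hle⟩
          | succ j =>
            simp only [Fin.cases_succ]
            exact ⟨le_trans hN₀₁.le (hb j).1, (hb j).2⟩
        have h2 := hch (k + 1) (Fin.cases N₀ c) hmono hbd
        omega
      obtain ⟨s, hcard, hspan⟩ := ih N₁ N hN₁N hch'
      refine ⟨insert x s, ?_, ?_⟩
      · calc (insert x s).card ≤ s.card + 1 := Finset.card_insert_le x s
          _ ≤ d + 1 := by omega
      · rw [Finset.coe_insert, Submodule.span_insert, ← sup_assoc, ← hN₁def]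
        exact hspan

/-- `M` has length at most `d` as an `R`-module: every strictly increasing chain of
submodules of `M` has at most `d + 1` terms. -/
def ModuleLengthLE (R M : Type*) [CommRing R] [AddCommGroup M] [Module R M] (d : ℕ) : Prop :=
  ∀ (k : ℕ) (c : Fin (k + 1) → Submodule R M), StrictMono c → k ≤ d

/-- If `(R, M)` is a Noetherian local ring and `h₁, h₂ ∈ M` are such that `R/(h₁, h₂)`
has length at most `d`, then the maximal ideal `M` is generated by at most `d + 1`
elements. -/
theorem maximalIdeal_generated_by_d_add_one
    (R : Type*) [CommRing R] [IsNoetherianRing R] [IsLocalRing R]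
    (h₁ h₂ : R) (hh₁ : h₁ ∈ IsLocalRing.maximalIdeal R) (hh₂ : h₂ ∈ IsLocalRing.maximalIdeal R)
    (d : ℕ)
    (hlen : ModuleLengthLE R (R ⧸ Ideal.span {h₁, h₂}) d) :
    ∃ S : Finset R, S.card ≤ d + 1 ∧ Ideal.span (S : Set R) = IsLocalRing.maximalIdeal R := by
  classical
  set I : Ideal R := Ideal.span {h₁, h₂} with hIdef
  set Mx : Ideal R := IsLocalRing.maximalIdeal R with hMdef
  have hIM : I ≤ Mx := by
    rw [hIdef, Ideal.span_le]
    intro y hy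
    rcases hy with rfl | hy
    · exact hh₁
    · rcases hy with rfl; exact hh₂
  set f : R →ₗ[R] R ⧸ I := Submodule.mkQ (I : Submodule R R) with hfdef
  have hfmk : ∀ y : R, f y = Ideal.Quotient.mk I y := fun _ => rfl
  have hfsurj : Function.Surjective f := Submodule.mkQ_surjective _
  set m' : Submodule R (R ⧸ I) := Submodule.map f (Mx : Submodule R R) with hm'def
  -- 1 is not in m'
  have hone : (1 : R ⧸ I) ∉ m' := by
    intro h
    obtain ⟨y, hyM, hy⟩ := h
    have hy' : Ideal.Quotient.mk I y = Ideal.Quotient.mk I 1 := by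
      rw [map_one]; exact hy
    have hy1 : y - 1 ∈ I := Ideal.Quotient.eq.mp hy'
    have h1M : (1 : R) ∈ Mx := by
      have : (1 : R) = y - (y - 1) := by ring
      rw [this]
      exact Submodule.sub_mem _ hyM (hIM hy1)
    exact IsLocalRing.maximalIdeal.isMaximal R |>.ne_top ((Ideal.eq_top_iff_one _).mpr h1M)
  have hm'top : m' < ⊤ := lt_of_le_of_ne le_top (fun h => hone (h ▸ Submodule.mem_top))
  -- chain condition inside [⊥, m']
  have hchain : ∀ (k : ℕ) (c : Fin (k + 1) → Submodule R (R ⧸ I)), StrictMono c →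
      (∀ i, (⊥ : Submodule R (R ⧸ I)) ≤ c i ∧ c i ≤ m') → k + 1 ≤ d := by
    intro k c hc hb
    refine hlen (k + 1) (Fin.snoc c ⊤) ?_
    rw [Fin.strictMono_iff_lt_succ]
    intro i
    induction i using Fin.lastCases with
    | last =>
      rw [Fin.succ_last, Fin.snoc_last, Fin.snoc_castSucc]
      exact lt_of_le_of_lt (hb _).2 hm'top
    | cast j =>
      rw [Fin.succ_castSucc, Fin.snoc_castSucc, Fin.snoc_castSucc]
      exact hc (Fin.castSucc_lt_succ (i := j))
  have hd1 : 1 ≤ d := by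
    have h0 := hchain 0 (fun _ => ⊥)
      (fun i j hij => by fin_cases i; fin_cases j; exact absurd hij (lt_irrefl _))
      (fun i => ⟨le_refl _, bot_le⟩)
    omega
  obtain ⟨s, hscard, hsspan⟩ := chain_gen (d - 1) ⊥ m' bot_le (fun k c hc hb => by
    have := hchain k c hc hb; omega)
  rw [bot_sup_eq] at hsspan
  -- lift s to R
  choose g hgspec using hfsurj
  refine ⟨insert h₁ (insert h₂ (s.image g)), ?_, ?_⟩
  · calc (insert h₁ (insert h₂ (s.image g))).card
        ≤ (insert h₂ (s.image g)).card + 1 := Finset.card_insert_le _ _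
      _ ≤ (s.image g).card + 2 := by have := Finset.card_insert_le h₂ (s.image g); omega
      _ ≤ s.card + 2 := by have := Finset.card_image_le (f := g) (s := s); omega
      _ ≤ d + 1 := by omega
  · apply le_antisymm
    · rw [Ideal.span_le]
      intro y hy
      simp only [Finset.coe_insert, Set.mem_insert_iff, Finset.coe_image, Set.mem_image,
        Finset.mem_coe] at hy
      rcases hy with rfl | rfl | ⟨x, hxs, rfl⟩
      · exact hh₁
      · exact hh₂
      · have hxm' : x ∈ m' := by
          rw [← hsspan]
          exact Submodule.subset_span hxs
        obtain ⟨z, hzM, hz⟩ := hxm'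
        have hgz : g x - z ∈ I := by
          refine Ideal.Quotient.eq.mp ?_
          rw [← hfmk, ← hfmk, hgspec, hz]
        have h2 : g x - z ∈ Mx := hIM hgz
        have hgx : g x = (g x - z) + z := by ring
        rw [hgx]
        exact Submodule.add_mem _ h2 hzM
    · intro y hyM
      have hfy : f y ∈ m' := ⟨y, hyM, rfl⟩
      rw [← hsspan] at hfy
      have himg : (s : Set (R ⧸ I)) = f '' ((s.image g : Finset R) : Set R) := by
        rw [Finset.coe_image, ← Set.image_comp]
        ext x
        constructor
        · intro hx; exact ⟨x, hx, hgspec x⟩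
        · rintro ⟨z, hz, rfl⟩; rw [Function.comp_apply, hgspec]; exact hz
      rw [himg, ← Submodule.map_span] at hfy
      obtain ⟨z, hz, hfz⟩ := hfy
      have hyz : y - z ∈ I := by
        refine Ideal.Quotient.eq.mp ?_
        rw [← hfmk, ← hfmk]
        exact hfz.symm
      have h1 : y - z ∈ Ideal.span (↑(insert h₁ (insert h₂ (s.image g))) : Set R) := by
        refine Ideal.span_mono ?_ (hIdef ▸ hyz)
        intro w hw
        simp only [Finset.coe_insert, Set.mem_insert_iff]
        rcases hw with rfl | hw
        · left; rfl
        · rcases hw with rfl; right; left; rfl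
      have h2 : z ∈ Ideal.span (↑(insert h₁ (insert h₂ (s.image g))) : Set R) := by
        refine Submodule.span_le.mpr ?_ hz
        intro w hw
        apply Submodule.subset_span
        simp only [Finset.coe_insert, Set.mem_insert_iff]
        right; right; exact hw
      have hsplit : y = (y - z) + z := by ring
      rw [hsplit]
      exact Submodule.add_mem _ h1 h2
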